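/- The lifting of relations to distributions composes: if μ1 ⊑_{R12} μ2 and μ2 ⊑_{R23} μ3, then μ1 ⊑_{R23 ∘ R12} μ3, where R23 ∘ R12 = {(s1,s3) | ∃ s2, (s1,s2) ∈ R12 and (s2,s3) ∈ R23}. -/

import Mathlib

open Classical

structure FDist (S : Type) [Fintype S] where
  pmf : S → ℝ
  nonneg : ∀ s, 0 ≤ pmf s
  sum_one : ∑ s, pmf s = 1

namespace FDist

variable {S S1 S2 : Type} [Fintype S] [Fintype S1] [Fintype S2]

noncomputable def prob (μ : FDist S) (T : Set S) : ℝ :=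
  ∑ s, if s ∈ T then μ.pmf s else 0

def supp (μ : FDist S) : Set S := {s | 0 < μ.pmf s}

noncomputable def dirac (s : S) : FDist S where
  pmf t := if t = s then 1 else 0
  nonneg t := by try dsimp only
                 split <;> norm_num
  sum_one := by simp

noncomputable def prod (μ1 : FDist S1) (μ2 : FDist S2) : FDist (S1 × S2) where
  pmf p := μ1.pmf p.1 * μ2.pmf p.2
  nonneg p := mul_nonneg (μ1.nonneg _) (μ2.nonneg _)
  sum_one := by
    rw [Fintype.sum_prod_type]
    simp_rw [← Finset.mul_sum, μ2.sum_one, mul_one]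
    exact μ1.sum_one

end FDist

/-- Image of a set under a relation: `R(T) = {s2 | ∃ s1 ∈ T, (s1,s2) ∈ R}`. -/
def relImage {S1 S2 : Type} (R : Set (S1 × S2)) (T : Set S1) : Set S2 :=
  {s2 | ∃ s1 ∈ T, (s1, s2) ∈ R}

/-- The lifting `μ1 ⊑_R μ2` of a relation on states to distributions,
via the Hall-type subset condition. -/
def liftRel {S1 S2 : Type} [Fintype S1] [Fintype S2]
    (R : Set (S1 × S2)) (μ1 : FDist S1) (μ2 : FDist S2) : Prop :=
  ∀ T ⊆ μ1.supp, μ1.prob T ≤ μ2.prob (relImage R T)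

/-- A (finite, finitely-branching) labeled probabilistic transition system. -/
structure LPTS (S : Type) (Act : Type) [Fintype S] where
  start : S
  alpha : Set Act
  trans : S → Act → Set (FDist S)
  trans_mem : ∀ s a μ, μ ∈ trans s a → a ∈ alpha
  finite_trans : ∀ s a, (trans s a).Finite

/-- `R` is a strong simulation between `L1` and `L2`. -/
def StrongSim {S1 S2 Act : Type} [Fintype S1] [Fintype S2]
    (L1 : LPTS S1 Act) (L2 : LPTS S2 Act) (R : Set (S1 × S2)) : Prop :=
  ∀ s1 s2, (s1, s2) ∈ R → ∀ a μ1, μ1 ∈ L1.trans s1 a →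
    ∃ μ2 ∈ L2.trans s2 a, liftRel R μ1 μ2

/-- `L2` strongly simulates `L1` (written `L1 ≼ L2`). -/
def Sim {S1 S2 Act : Type} [Fintype S1] [Fintype S2]
    (L1 : LPTS S1 Act) (L2 : LPTS S2 Act) : Prop :=
  ∃ R, StrongSim L1 L2 R ∧ (L1.start, L2.start) ∈ R

/-- The lifting of relations to distributions composes. -/
theorem liftRel_comp {S1 S2 S3 : Type} [Fintype S1] [Fintype S2] [Fintype S3]
    (R12 : Set (S1 × S2)) (R23 : Set (S2 × S3))
    (μ1 : FDist S1) (μ2 : FDist S2) (μ3 : FDist S3)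
    (h12 : liftRel R12 μ1 μ2) (h23 : liftRel R23 μ2 μ3) :
    liftRel {p : S1 × S3 | ∃ s2, (p.1, s2) ∈ R12 ∧ (s2, p.2) ∈ R23} μ1 μ3 := by
  have prob_mono : ∀ {S : Type} [Fintype S] (μ : FDist S) (A B : Set S),
      A ⊆ B → μ.prob A ≤ μ.prob B := by
    intro S _ μ A B hAB
    apply Finset.sum_le_sum
    intro s _
    by_cases hs : s ∈ A
    · simp [hs, hAB hs]
    · simp only [hs, if_false]; split <;> [exact μ.nonneg s; exact le_refl 0]
  intro T hT
  have h1 := h12 T hT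
  set T2 := relImage R12 T ∩ μ2.supp with hT2
  have heq : μ2.prob (relImage R12 T) = μ2.prob T2 := by
    apply Finset.sum_congr rfl
    intro s _
    by_cases hs : s ∈ μ2.supp
    · by_cases h : s ∈ relImage R12 T <;> simp [h, hs, hT2]
    · have : μ2.pmf s = 0 := le_antisymm (not_lt.mp hs) (μ2.nonneg s)
      simp [this]
  have h2 := h23 T2 Set.inter_subset_right
  have hsub : relImage R23 T2 ⊆
      relImage {p : S1 × S3 | ∃ s2, (p.1, s2) ∈ R12 ∧ (s2, p.2) ∈ R23} T := by
    rintro s3 ⟨s2, ⟨⟨s1, hs1, h12'⟩, _⟩, h23'⟩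
    exact ⟨s1, hs1, ⟨s2, h12', h23'⟩⟩
  calc μ1.prob T ≤ μ2.prob (relImage R12 T) := h1
    _ = μ2.prob T2 := heq
    _ ≤ μ3.prob (relImage R23 T2) := h2
    _ ≤ _ := prob_mono μ3 _ _ hsub
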